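/- Let w : (0,∞) × ℝ^d → ℝ be such that for each a > 0 the function w(a,·) is twice continuously differentiable, satisfies Δ_x w(a,x) = a V(x)(1 + w(a,x)) for all x ∈ ℝ^d, and w(a,x) → 0 as |x| → ∞. Then for each fixed x ∈ ℝ^d the map a ↦ w(a,x) is differentiable on (0,∞), and its derivative v(a,x) = ∂w/∂a (a,x) satisfies a^{−1} w(a,x) ≤ v(a,x) ≤ 0 for all a > 0 and x ∈ ℝ^d. -/

import Mathlib

open MeasureTheory Filter

/-- The Laplacian of `f : ℝ^d → ℝ`, as the sum of the second partial derivatives. -/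
noncomputable def lap {d : ℕ} (f : EuclideanSpace ℝ (Fin d) → ℝ)
    (x : EuclideanSpace ℝ (Fin d)) : ℝ :=
  ∑ i : Fin d, fderiv ℝ (fun y => fderiv ℝ f y (EuclideanSpace.single i 1)) x
    (EuclideanSpace.single i 1)

open Set Topology

variable {d : ℕ}

local notation "E" => EuclideanSpace ℝ (Fin d)

lemma contDiff_fderiv_apply {f : E → ℝ} (hf : ContDiff ℝ 2 f) (v : E) :
    ContDiff ℝ 1 (fun y => fderiv ℝ f y v) := by
  have h1 : ContDiff ℝ 1 (fderiv ℝ f) := hf.fderiv_right (by norm_num)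
  exact (ContinuousLinearMap.apply ℝ ℝ v).contDiff.comp h1

lemma diff_fderiv_apply {f : E → ℝ} (hf : ContDiff ℝ 2 f) (v : E) :
    Differentiable ℝ (fun y => fderiv ℝ f y v) :=
  (contDiff_fderiv_apply hf v).differentiable one_ne_zero

lemma lap_comb {f g : E → ℝ} (hf : ContDiff ℝ 2 f) (hg : ContDiff ℝ 2 g)
    (c0 p q : ℝ) (u : E → ℝ) (hu : ∀ y, u y = c0 + p * f y + q * g y) (x : E) :
    lap u x = p * lap f x + q * lap g x := by
  have hfd : Differentiable ℝ f := hf.differentiable two_ne_zero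
  have hgd : Differentiable ℝ g := hg.differentiable two_ne_zero
  have hu' : u = fun y => c0 + p * f y + q * g y := funext hu
  subst hu'
  unfold lap
  rw [Finset.mul_sum, Finset.mul_sum, ← Finset.sum_add_distrib]
  apply Finset.sum_congr rfl
  intro i _
  set e := EuclideanSpace.single i (1:ℝ) with he
  have hin : (fun y => fderiv ℝ (fun z => c0 + p * f z + q * g z) y e)
      = fun y => p * fderiv ℝ f y e + q * fderiv ℝ g y e := by
    funext y
    have h1 : HasFDerivAt (fun z => c0 + p * f z + q * g z)
        (p • fderiv ℝ f y + q • fderiv ℝ g y) y := by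
      have := ((((hfd y).hasFDerivAt.const_mul p).add
        ((hgd y).hasFDerivAt.const_mul q)).const_add c0)
      simpa [add_assoc] using this
    rw [h1.fderiv]
    simp
  rw [hin]
  have hA : DifferentiableAt ℝ (fun y => fderiv ℝ f y e) x := (diff_fderiv_apply hf e) x
  have hB : DifferentiableAt ℝ (fun y => fderiv ℝ g y e) x := (diff_fderiv_apply hg e) x
  have h2 : HasFDerivAt (fun y => p * fderiv ℝ f y e + q * fderiv ℝ g y e)
      (p • fderiv ℝ (fun y => fderiv ℝ f y e) x + q • fderiv ℝ (fun y => fderiv ℝ g y e) x) x :=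
    ((hA.hasFDerivAt.const_mul p).add (hB.hasFDerivAt.const_mul q))
  rw [h2.fderiv]
  simp

lemma second_test {g g1 : ℝ → ℝ} {m : ℝ} (hg : ∀ t, HasDerivAt g (g1 t) t)
    (hg1 : HasDerivAt g1 m 0) (hmax : IsLocalMax g 0) : m ≤ 0 := by
  by_contra h
  push_neg at h
  have h0 : g1 0 = 0 := hmax.hasDerivAt_eq_zero (hg 0)
  have hs : Tendsto (slope g1 0) (𝓝[≠] (0:ℝ)) (𝓝 m) :=
    hasDerivAt_iff_tendsto_slope.1 hg1
  have hs' : Tendsto (slope g1 0) (𝓝[>] (0:ℝ)) (𝓝 m) :=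
    hs.mono_left (nhdsWithin_mono _ (fun t ht => ht.ne'))
  have hev : ∀ᶠ t in 𝓝[>] (0:ℝ), 0 < slope g1 0 t :=
    hs' (Ioi_mem_nhds h)
  have hev2 : ∀ᶠ t in 𝓝[>] (0:ℝ), 0 < g1 t := by
    filter_upwards [hev, self_mem_nhdsWithin] with t ht ht'
    have : slope g1 0 t = g1 t / t := by
      simp [slope_def_field, h0]
    rw [this] at ht
    have htpos := mem_Ioi.1 ht'
    have : g1 t = (g1 t / t) * t := (div_mul_cancel₀ (g1 t) htpos.ne').symm
    rw [this]
    exact mul_pos ht htpos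
  have hev3 : ∀ᶠ t in 𝓝[>] (0:ℝ), g t ≤ g 0 := by
    exact nhdsWithin_le_nhds hmax
  obtain ⟨s, hsmem, hssub⟩ := eventually_iff_exists_mem.1 (hev2.and hev3)
  obtain ⟨δ, hδ, hδsub⟩ := mem_nhdsGT_iff_exists_Ioo_subset.1 hsmem
  have hδ0 : (0:ℝ) < δ := mem_Ioi.1 hδ
  have hmono : StrictMonoOn g (Icc 0 (δ/2)) := by
    apply strictMonoOn_of_deriv_pos (convex_Icc _ _)
    · exact fun t _ => ((hg t).differentiableAt).continuousAt.continuousWithinAt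
    · intro t ht
      rw [interior_Icc] at ht
      rw [(hg t).deriv]
      exact (hssub _ (hδsub ⟨ht.1, by linarith [ht.2]⟩)).1
  have h1 : g 0 < g (δ/2) := hmono ⟨le_refl 0, by linarith⟩ ⟨by linarith, le_refl _⟩ (by linarith)
  have h2 : g (δ/2) ≤ g 0 := (hssub _ (hδsub ⟨by linarith, by linarith⟩)).2
  linarith
lemma lap_nonpos_of_isLocalMax {v : EuclideanSpace ℝ (Fin d) → ℝ} (hv : ContDiff ℝ 2 v)
    {x0 : EuclideanSpace ℝ (Fin d)} (hmax : IsLocalMax v x0) : lap v x0 ≤ 0 := by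
  unfold lap
  apply Finset.sum_nonpos
  intro i _
  set e : EuclideanSpace ℝ (Fin d) := EuclideanSpace.single i (1:ℝ) with he
  set L : ℝ → EuclideanSpace ℝ (Fin d) := fun t => x0 + t • e with hLdef
  have hvd : Differentiable ℝ v := hv.differentiable two_ne_zero
  have hLd : ∀ t : ℝ, HasDerivAt L e t := by
    intro t
    have : HasDerivAt (fun s : ℝ => s • e) ((1:ℝ) • e) t := (hasDerivAt_id t).smul_const e
    simpa [hLdef] using this.const_add x0
  have hL0 : L 0 = x0 := by simp [hLdef]
  have hLcont : Tendsto L (𝓝 0) (𝓝 x0) := by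
    have : Continuous L := by
      apply continuous_const.add (continuous_id.smul continuous_const)
    simpa [hL0] using this.tendsto 0
  have hg : ∀ t : ℝ, HasDerivAt (v ∘ L) (fderiv ℝ v (L t) e) t := fun t =>
    (hvd (L t)).hasFDerivAt.comp_hasDerivAt t (hLd t)
  have hA : Differentiable ℝ (fun y => fderiv ℝ v y e) := diff_fderiv_apply hv e
  have hg1 : HasDerivAt (fun t => fderiv ℝ v (L t) e)
      (fderiv ℝ (fun y => fderiv ℝ v y e) x0 e) 0 := by
    have := (hA (L 0)).hasFDerivAt.comp_hasDerivAt 0 (hLd 0)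
    rw [hL0] at this
    exact this
  have hmax' : IsLocalMax (v ∘ L) 0 := by
    have : IsMaxFilter v (𝓝 x0) (L 0) := by rwa [hL0]
    exact this.comp_tendsto hLcont
  exact second_test hg hg1 hmax'
noncomputable def phi (x : EuclideanSpace ℝ (Fin d)) : ℝ := -((1 + ‖x‖ ^ 2) ^ (-(1/2) : ℝ))

lemma phi_hasFDerivAt (y : E) :
    HasFDerivAt (phi (d := d)) (((1 + ‖y‖ ^ 2) ^ (-(3/2) : ℝ)) • (innerSL ℝ y)) y := by
  have hpos : (0:ℝ) < 1 + ‖y‖ ^ 2 := by positivity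
  have h1 : HasFDerivAt (fun x : E => ‖x‖ ^ 2) ((2:ℕ) • innerSL ℝ y) y :=
    (hasStrictFDerivAt_norm_sq y).hasFDerivAt
  have h2 : HasDerivAt (fun t : ℝ => -((1 + t) ^ (-(1/2) : ℝ)))
      ((1/2) * (1 + ‖y‖ ^ 2) ^ (-(3/2) : ℝ)) (‖y‖ ^ 2) := by
    have hb := Real.hasDerivAt_rpow_const (x := 1 + ‖y‖ ^ 2) (p := -(1/2)) (Or.inl hpos.ne')
    have he : (-(1/2) : ℝ) - 1 = -(3/2) := by norm_num
    rw [he] at hb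
    have hc := (hb.comp (‖y‖ ^ 2) ((hasDerivAt_id (‖y‖ ^ 2)).const_add 1)).neg
    exact hc.congr_deriv (by ring)
  have h3 := h2.comp_hasFDerivAt y h1
  have : phi (d := d) = (fun t : ℝ => -((1 + t) ^ (-(1/2) : ℝ))) ∘ (fun x : E => ‖x‖ ^ 2) := rfl
  rw [this]
  refine h3.congr_fderiv ?_
  ext v
  simp [ContinuousLinearMap.smul_apply]
  ring

lemma phi_fderiv_apply (y : E) (v : E) :
    fderiv ℝ (phi (d := d)) y v = ((1 + ‖y‖ ^ 2) ^ (-(3/2) : ℝ)) * (inner ℝ y v : ℝ) := by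
  rw [(phi_hasFDerivAt y).fderiv]
  simp

lemma phi_contDiff : ContDiff ℝ 2 (phi (d := d)) := by
  rw [contDiff_iff_contDiffAt]
  intro x
  have hpos : (0:ℝ) < 1 + ‖x‖ ^ 2 := by positivity
  have h1 : ContDiffAt ℝ 2 (fun x : E => 1 + ‖x‖ ^ 2) x :=
    (contDiff_const.add (contDiff_norm_sq ℝ (n := 2))).contDiffAt
  have h2 : ContDiffAt ℝ 2 (fun t : ℝ => t ^ (-(1/2) : ℝ)) (1 + ‖x‖ ^ 2) :=
    Real.contDiffAt_rpow_const_of_ne hpos.ne'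
  exact ((h2.comp x h1).neg)
lemma phi_nonpos (x : E) : phi (d := d) x ≤ 0 := by
  have : (0:ℝ) < (1 + ‖x‖ ^ 2) ^ (-(1/2) : ℝ) :=
    Real.rpow_pos_of_pos (by positivity) _
  simp only [phi]
  linarith

lemma phi_ge_neg_one (x : E) : -1 ≤ phi (d := d) x := by
  have : (1 + ‖x‖ ^ 2) ^ (-(1/2) : ℝ) ≤ 1 :=
    Real.rpow_le_one_of_one_le_of_nonpos (by nlinarith [sq_nonneg ‖x‖]) (by norm_num)
  simp only [phi]
  linarith

lemma phi_tendsto : Tendsto (phi (d := d)) (cocompact (EuclideanSpace ℝ (Fin d))) (𝓝 0) := by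
  have h1 : Tendsto (fun x : E => ‖x‖) (cocompact (EuclideanSpace ℝ (Fin d))) atTop :=
    tendsto_norm_cocompact_atTop
  have h2 : Tendsto (fun x : E => ‖x‖ ^ 2) (cocompact (EuclideanSpace ℝ (Fin d))) atTop :=
    (tendsto_pow_atTop two_ne_zero).comp h1
  have h3 : Tendsto (fun x : E => 1 + ‖x‖ ^ 2) (cocompact (EuclideanSpace ℝ (Fin d))) atTop :=
    tendsto_atTop_add_const_left _ 1 h2
  have h4 : Tendsto (fun t : ℝ => t ^ (-(1/2) : ℝ)) atTop (𝓝 0) :=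
    tendsto_rpow_neg_atTop (by norm_num)
  have h5 := (h4.comp h3).neg
  show Tendsto (fun x : E => -((1 + ‖x‖ ^ 2) ^ (-(1/2) : ℝ)))
    (cocompact (EuclideanSpace ℝ (Fin d))) (𝓝 0)
  simpa [Function.comp] using h5

lemma sum_sq_eq_norm_sq (x : E) : ∑ i : Fin d, (x i) ^ 2 = ‖x‖ ^ 2 := by
  rw [EuclideanSpace.norm_eq, Real.sq_sqrt (by positivity)]
  simp [sq_abs]

lemma phi_lap_pos (hd : 3 ≤ d) (x : E) : 0 < lap (phi (d := d)) x := by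
  have hpos : (0:ℝ) < 1 + ‖x‖ ^ 2 := by positivity
  have key : ∀ i : Fin d, fderiv ℝ (fun y => fderiv ℝ (phi (d := d)) y (EuclideanSpace.single i 1))
      x (EuclideanSpace.single i 1)
      = (1 + ‖x‖ ^ 2) ^ (-(3/2) : ℝ) + (-3) * (1 + ‖x‖ ^ 2) ^ (-(5/2) : ℝ) * (x i) ^ 2 := by
    intro i
    have hfun : (fun y : E => fderiv ℝ (phi (d := d)) y (EuclideanSpace.single i 1))
        = fun y : E => ((1 + ‖y‖ ^ 2) ^ (-(3/2) : ℝ)) * y i := by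
      funext y
      rw [phi_fderiv_apply]
      congr 1
      simp [EuclideanSpace.inner_single_right]
    rw [hfun]
    have hu : HasFDerivAt (fun y : E => ((1 + ‖y‖ ^ 2) ^ (-(3/2) : ℝ)))
        ((-(3/2) * (1 + ‖x‖ ^ 2) ^ (-(5/2) : ℝ)) • ((2:ℕ) • innerSL ℝ x)) x := by
      have hb := Real.hasDerivAt_rpow_const (x := 1 + ‖x‖ ^ 2) (p := -(3/2)) (Or.inl hpos.ne')
      have he : (-(3/2) : ℝ) - 1 = -(5/2) := by norm_num
      rw [he] at hb
      have h1 : HasFDerivAt (fun y : E => 1 + ‖y‖ ^ 2) ((2:ℕ) • innerSL ℝ x) x :=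
        ((hasStrictFDerivAt_norm_sq x).hasFDerivAt).const_add 1
      exact hb.comp_hasFDerivAt x h1
    have hv : HasFDerivAt (fun y : E => y i) (EuclideanSpace.proj (𝕜 := ℝ) i) x :=
      (EuclideanSpace.proj (𝕜 := ℝ) i).hasFDerivAt
    have hprod := hu.fun_mul hv
    rw [hprod.fderiv]
    have hproj : (EuclideanSpace.proj (𝕜 := ℝ) i) (EuclideanSpace.single i 1) = 1 := by
      simp [EuclideanSpace.single_apply]
    simp only [ContinuousLinearMap.add_apply, ContinuousLinearMap.smul_apply, smul_eq_mul,
      hproj, EuclideanSpace.inner_single_right, innerSL_apply_apply, starRingEnd_apply, star_trivial,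
      nsmul_eq_mul]
    push_cast
    ring
  unfold lap
  rw [Finset.sum_congr rfl (fun i _ => key i)]
  rw [Finset.sum_add_distrib, Finset.sum_const, Finset.card_fin]
  have hsum : ∑ i : Fin d, (-3) * (1 + ‖x‖ ^ 2) ^ (-(5/2) : ℝ) * (x i) ^ 2
      = (-3) * (1 + ‖x‖ ^ 2) ^ (-(5/2) : ℝ) * ‖x‖ ^ 2 := by
    rw [← Finset.mul_sum, sum_sq_eq_norm_sq]
  rw [hsum]
  have hsplit : (1 + ‖x‖ ^ 2) ^ (-(3/2) : ℝ) = (1 + ‖x‖ ^ 2) ^ (-(5/2) : ℝ) * (1 + ‖x‖ ^ 2) := by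
    have : (1 + ‖x‖ ^ 2) ^ ((-(5/2) : ℝ) + 1) = (1 + ‖x‖ ^ 2) ^ (-(5/2) : ℝ) * (1 + ‖x‖ ^ 2) ^ (1:ℝ) :=
      Real.rpow_add hpos _ _
    rw [Real.rpow_one] at this
    rw [← this]
    norm_num
  rw [hsplit]
  have h5pos : (0:ℝ) < (1 + ‖x‖ ^ 2) ^ (-(5/2) : ℝ) := Real.rpow_pos_of_pos hpos _
  have hq : (0:ℝ) ≤ ‖x‖ ^ 2 := sq_nonneg _
  have hd3 : (3:ℝ) ≤ (d:ℝ) := by exact_mod_cast hd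
  have : (d:ℝ) * ((1 + ‖x‖ ^ 2) ^ (-(5/2) : ℝ) * (1 + ‖x‖ ^ 2))
      + (-3) * (1 + ‖x‖ ^ 2) ^ (-(5/2) : ℝ) * ‖x‖ ^ 2
      = (1 + ‖x‖ ^ 2) ^ (-(5/2) : ℝ) * ((d:ℝ) + ((d:ℝ) - 3) * ‖x‖ ^ 2) := by ring
  rw [nsmul_eq_mul, this]
  have : (0:ℝ) < (d:ℝ) + ((d:ℝ) - 3) * ‖x‖ ^ 2 := by nlinarith
  positivity
lemma max_principle (hd : 3 ≤ d) {u : EuclideanSpace ℝ (Fin d) → ℝ} (hu : ContDiff ℝ 2 u)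
    {c : ℝ} (hc : c ≤ 0) (hl : Tendsto u (cocompact (EuclideanSpace ℝ (Fin d))) (𝓝 c))
    (hs : ∀ x, 0 < u x → 0 ≤ lap u x) : ∀ x, u x ≤ 0 := by
  by_contra hcon
  push_neg at hcon
  obtain ⟨x1, hx1⟩ := hcon
  set m := u x1 with hm
  set ε := m / 2 with hε
  have hεpos : 0 < ε := by simp [hε]; linarith
  set v : EuclideanSpace ℝ (Fin d) → ℝ := fun x => u x + ε * phi x with hv
  have hvC : ContDiff ℝ 2 v := hu.add (contDiff_const.mul phi_contDiff)
  have hvlim : Tendsto v (cocompact (EuclideanSpace ℝ (Fin d))) (𝓝 (c + ε * 0)) :=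
    hl.add (phi_tendsto.const_mul ε)
  have hlt : c + ε * 0 < m / 2 := by simp; linarith
  have hev : ∀ᶠ x in cocompact (EuclideanSpace ℝ (Fin d)), v x < m / 2 :=
    hvlim.eventually_lt_const hlt
  obtain ⟨K, hK, hsub⟩ := mem_cocompact.mp hev
  set K' : Set (EuclideanSpace ℝ (Fin d)) := K ∪ {x1} with hK'def
  have hK' : IsCompact K' := hK.union isCompact_singleton
  have hne : K'.Nonempty := ⟨x1, Or.inr rfl⟩
  obtain ⟨x0, hx0K, hx0max⟩ := hK'.exists_isMaxOn hne hvC.continuous.continuousOn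
  have hvx1 : m / 2 ≤ v x1 := by
    have h1 := phi_ge_neg_one (d := d) x1
    simp only [hv]
    nlinarith
  have hx0ge : m / 2 ≤ v x0 := le_trans hvx1 (hx0max (Or.inr rfl))
  have hglob : ∀ y, v y ≤ v x0 := by
    intro y
    by_cases hy : y ∈ K'
    · exact hx0max hy
    · have hyK : y ∈ Kᶜ := fun h => hy (Or.inl h)
      have := hsub hyK
      simp only [mem_setOf_eq] at this
      exact this.le.trans hx0ge
  have hlocmax : IsLocalMax v x0 := Filter.Eventually.of_forall hglob
  have hu0 : 0 < u x0 := by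
    have h1 := phi_nonpos (d := d) x0
    have h2 : ε * phi x0 ≤ 0 := mul_nonpos_of_nonneg_of_nonpos hεpos.le h1
    have h3 : v x0 = u x0 + ε * phi x0 := rfl
    nlinarith
  have h1 : 0 ≤ lap u x0 := hs x0 hu0
  have h2 : lap v x0 = 1 * lap u x0 + ε * lap (phi (d := d)) x0 :=
    lap_comb hu phi_contDiff 0 1 ε v (fun y => by simp [hv]) x0
  have h3 : 0 < lap v x0 := by
    have h4 := phi_lap_pos hd x0
    rw [h2]
    nlinarith
  have h4 : lap v x0 ≤ 0 := lap_nonpos_of_isLocalMax hvC hlocmax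
  linarith
section Comparisons

variable {V : EuclideanSpace ℝ (Fin d) → ℝ} {w : ℝ → EuclideanSpace ℝ (Fin d) → ℝ}

def HW (V : EuclideanSpace ℝ (Fin d) → ℝ) (w : ℝ → EuclideanSpace ℝ (Fin d) → ℝ) : Prop :=
  ∀ a : ℝ, 0 < a → ContDiff ℝ 2 (w a) ∧
      (∀ x, lap (w a) x = a * V x * (1 + w a x)) ∧
      Tendsto (w a) (cocompact (EuclideanSpace ℝ (Fin d))) (nhds 0)

lemma step2 (hd : 3 ≤ d) (hV0 : ∀ x, 0 ≤ V x) (hw : HW V w)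
    {a : ℝ} (ha : 0 < a) (x : E) : 0 ≤ 1 + w a x := by
  obtain ⟨hC, hlap, hlim⟩ := hw a ha
  set u : EuclideanSpace ℝ (Fin d) → ℝ := fun y => -1 - w a y with hu
  have huC : ContDiff ℝ 2 u := contDiff_const.sub hC
  have hulim : Tendsto u (cocompact (EuclideanSpace ℝ (Fin d))) (𝓝 (-1 - 0)) :=
    tendsto_const_nhds.sub hlim
  have hmp := max_principle hd huC (c := -1 - 0) (by norm_num) hulim ?_ x
  · simp only [hu] at hmp; linarith
  · intro y hy
    have hl : lap u y = (-1) * lap (w a) y + 0 * lap (w a) y :=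
      lap_comb hC hC (-1) (-1) 0 u (fun z => by simp [hu]; ring) y
    rw [hl, hlap]
    have huy : u y = -1 - w a y := rfl
    rw [huy] at hy
    have : (0:ℝ) ≤ a * V y * (-1 - w a y) :=
      mul_nonneg (mul_nonneg ha.le (hV0 y)) (by linarith)
    nlinarith

lemma step3 (hd : 3 ≤ d) (hV0 : ∀ x, 0 ≤ V x) (hw : HW V w)
    {a b : ℝ} (ha : 0 < a) (hab : a ≤ b) (x : E) : w b x ≤ w a x := by
  have hb : 0 < b := lt_of_lt_of_le ha hab
  obtain ⟨hCa, hlapa, hlima⟩ := hw a ha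
  obtain ⟨hCb, hlapb, hlimb⟩ := hw b hb
  set u : EuclideanSpace ℝ (Fin d) → ℝ := fun y => w b y - w a y with hu
  have huC : ContDiff ℝ 2 u := hCb.sub hCa
  have hulim : Tendsto u (cocompact (EuclideanSpace ℝ (Fin d))) (𝓝 ((0:ℝ) - 0)) :=
    hlimb.sub hlima
  have hmp := max_principle hd huC (c := (0:ℝ) - 0) (by norm_num) hulim ?_ x
  · simp only [hu] at hmp; linarith
  · intro y hy
    have hl : lap u y = 1 * lap (w b) y + (-1) * lap (w a) y :=
      lap_comb hCb hCa 0 1 (-1) u (fun z => by simp [hu]; ring) y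
    rw [hl, hlapb, hlapa]
    have huy : u y = w b y - w a y := rfl
    rw [huy] at hy
    have h2 := step2 hd hV0 hw hb y
    have e1 : (0:ℝ) ≤ a * V y * (w b y - w a y) :=
      mul_nonneg (mul_nonneg ha.le (hV0 y)) (by linarith)
    have e2 : (0:ℝ) ≤ (b - a) * V y * (1 + w b y) :=
      mul_nonneg (mul_nonneg (by linarith) (hV0 y)) h2
    nlinarith

lemma step4 (hd : 3 ≤ d) (hV0 : ∀ x, 0 ≤ V x) (hw : HW V w)
    {a b : ℝ} (ha : 0 < a) (hab : a ≤ b) (x : E) : (1/a) * w a x ≤ (1/b) * w b x := by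
  have hb : 0 < b := lt_of_lt_of_le ha hab
  obtain ⟨hCa, hlapa, hlima⟩ := hw a ha
  obtain ⟨hCb, hlapb, hlimb⟩ := hw b hb
  set u : EuclideanSpace ℝ (Fin d) → ℝ := fun y => (1/a) * w a y - (1/b) * w b y with hu
  have huC : ContDiff ℝ 2 u := (contDiff_const.mul hCa).sub (contDiff_const.mul hCb)
  have hulim : Tendsto u (cocompact (EuclideanSpace ℝ (Fin d))) (𝓝 ((1/a) * 0 - (1/b) * 0)) :=
    (hlima.const_mul _).sub (hlimb.const_mul _)
  have hmp := max_principle hd huC (c := (1/a) * 0 - (1/b) * 0) (by norm_num) hulim ?_ x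
  · simp only [hu] at hmp; linarith
  · intro y _
    have hl : lap u y = (1/a) * lap (w a) y + (-(1/b)) * lap (w b) y :=
      lap_comb hCa hCb 0 (1/a) (-(1/b)) u (fun z => by simp [hu]; ring) y
    rw [hl, hlapa, hlapb]
    have h3 := step3 hd hV0 hw ha hab y
    have e1 : (0:ℝ) ≤ V y * (w a y - w b y) := mul_nonneg (hV0 y) (by linarith)
    have hane : a ≠ 0 := ha.ne'
    have hbne : b ≠ 0 := hb.ne'
    have hiden : (1/a) * (a * V y * (1 + w a y)) + (-(1/b)) * (b * V y * (1 + w b y))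
        = V y * (w a y - w b y) := by field_simp; ring
    rw [hiden]
    exact e1


lemma step5 (hd : 3 ≤ d) (hV0 : ∀ x, 0 ≤ V x) (hw : HW V w)
    {a b t : ℝ} (ha : 0 < a) (hb : 0 < b) (ht0 : 0 ≤ t) (ht1 : t ≤ 1) (x : E) :
    w ((1-t)*a + t*b) x ≤ (1-t) * w a x + t * w b x := by
  set c := (1-t)*a + t*b with hcdef
  have hc : 0 < c := by
    rcases le_or_gt t (1/2) with h | h
    · nlinarith
    · nlinarith
  obtain ⟨hCa, hlapa, hlima⟩ := hw a ha
  obtain ⟨hCb, hlapb, hlimb⟩ := hw b hb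
  obtain ⟨hCc, hlapc, hlimc⟩ := hw c hc
  set h : EuclideanSpace ℝ (Fin d) → ℝ := fun y => (1-t) * w a y + t * w b y with hh
  have hhC : ContDiff ℝ 2 h := (contDiff_const.mul hCa).add (contDiff_const.mul hCb)
  set u : EuclideanSpace ℝ (Fin d) → ℝ := fun y => w c y - h y with hu
  have huC : ContDiff ℝ 2 u := hCc.sub hhC
  have hulim : Tendsto u (cocompact (EuclideanSpace ℝ (Fin d)))
      (𝓝 ((0:ℝ) - ((1-t) * 0 + t * 0))) :=
    hlimc.sub ((hlima.const_mul _).add (hlimb.const_mul _))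
  have hmp := max_principle hd huC (c := (0:ℝ) - ((1-t) * 0 + t * 0)) (by norm_num) hulim ?_ x
  · simp only [hu, hh] at hmp; linarith
  · intro y hy
    have hlh : lap h y = (1-t) * lap (w a) y + t * lap (w b) y :=
      lap_comb hCa hCb 0 (1-t) t h (fun z => by simp [hh]) y
    have hl : lap u y = 1 * lap (w c) y + (-1) * lap h y :=
      lap_comb hCc hhC 0 1 (-1) u (fun z => by simp [hu]; ring) y
    rw [hl, hlh, hlapc, hlapa, hlapb]
    have huy : u y = w c y - ((1-t) * w a y + t * w b y) := rfl
    rw [huy] at hy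
    have hmono : (0:ℝ) ≤ (b - a) * (w a y - w b y) := by
      rcases le_total a b with hab | hba
      · have := step3 hd hV0 hw ha hab y
        nlinarith
      · have := step3 hd hV0 hw hb hba y
        nlinarith
    have e1 : (0:ℝ) ≤ c * V y * (w c y - ((1-t) * w a y + t * w b y)) :=
      mul_nonneg (mul_nonneg hc.le (hV0 y)) (by linarith)
    have e2 : (0:ℝ) ≤ V y * (t * (1-t) * ((b - a) * (w a y - w b y))) :=
      mul_nonneg (hV0 y) (mul_nonneg (mul_nonneg ht0 (by linarith)) hmono)
    have hiden : c * V y * (1 + w c y) - ((1-t) * (a * V y * (1 + w a y)) + t * (b * V y * (1 + w b y)))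
        = c * V y * (w c y - ((1-t) * w a y + t * w b y))
          + V y * (t * (1-t) * ((b - a) * (w a y - w b y))) := by
      rw [hcdef]; ring
    nlinarith [hiden]

lemma step6 (hd : 3 ≤ d) (hV0 : ∀ x, 0 ≤ V x) (hw : HW V w)
    {a b t : ℝ} (ha : 0 < a) (hb : 0 < b) (ht0 : 0 ≤ t) (ht1 : t ≤ 1) (x : E) :
    (1-t) * ((1/a) * w a x) + t * ((1/b) * w b x) ≤ (1/((1-t)*a + t*b)) * w ((1-t)*a + t*b) x := by
  set c := (1-t)*a + t*b with hcdef
  have hc : 0 < c := by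
    rcases le_or_gt t (1/2) with h | h
    · nlinarith
    · nlinarith
  obtain ⟨hCa, hlapa, hlima⟩ := hw a ha
  obtain ⟨hCb, hlapb, hlimb⟩ := hw b hb
  obtain ⟨hCc, hlapc, hlimc⟩ := hw c hc
  set h : EuclideanSpace ℝ (Fin d) → ℝ := fun y => ((1-t)/a) * w a y + (t/b) * w b y with hh
  have hhC : ContDiff ℝ 2 h := (contDiff_const.mul hCa).add (contDiff_const.mul hCb)
  set u : EuclideanSpace ℝ (Fin d) → ℝ := fun y => h y - (1/c) * w c y with hu
  have huC : ContDiff ℝ 2 u := hhC.sub (contDiff_const.mul hCc)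
  have hulim : Tendsto u (cocompact (EuclideanSpace ℝ (Fin d)))
      (𝓝 ((((1-t)/a) * 0 + (t/b) * 0) - (1/c) * 0)) :=
    ((hlima.const_mul _).add (hlimb.const_mul _)).sub (hlimc.const_mul _)
  have hmp := max_principle hd huC (c := (((1-t)/a) * 0 + (t/b) * 0) - (1/c) * 0)
    (by norm_num) hulim ?_ x
  · simp only [hu, hh] at hmp
    have : (1-t) * ((1/a) * w a x) + t * ((1/b) * w b x) = ((1-t)/a) * w a x + (t/b) * w b x := by
      ring
    rw [this]
    linarith
  · intro y _
    have hlh : lap h y = ((1-t)/a) * lap (w a) y + (t/b) * lap (w b) y :=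
      lap_comb hCa hCb 0 ((1-t)/a) (t/b) h (fun z => by simp [hh]) y
    have hl : lap u y = 1 * lap h y + (-(1/c)) * lap (w c) y :=
      lap_comb hhC hCc 0 1 (-(1/c)) u (fun z => by simp [hu]; ring) y
    rw [hl, hlh, hlapa, hlapb, hlapc]
    have h5 := step5 hd hV0 hw ha hb ht0 ht1 y
    have e1 : (0:ℝ) ≤ V y * ((1-t) * w a y + t * w b y - w c y) :=
      mul_nonneg (hV0 y) (by rw [← hcdef] at h5; linarith)
    have hane : a ≠ 0 := ha.ne'
    have hbne : b ≠ 0 := hb.ne'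
    have hcne : c ≠ 0 := hc.ne'
    have hiden : 1 * (((1-t)/a) * (a * V y * (1 + w a y)) + (t/b) * (b * V y * (1 + w b y)))
        + (-(1/c)) * (c * V y * (1 + w c y))
        = V y * ((1-t) * w a y + t * w b y - w c y) := by
      field_simp
      ring
    rw [hiden]
    exact e1

end Comparisons
section OneD

lemma oneD {f : ℝ → ℝ}
    (F3 : ∀ p q : ℝ, 0 < p → p ≤ q → f q ≤ f p)
    (F4 : ∀ p q : ℝ, 0 < p → p ≤ q → (1/p) * f p ≤ (1/q) * f q)
    (F5 : ∀ p q t : ℝ, 0 < p → 0 < q → 0 ≤ t → t ≤ 1 →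
      f ((1-t)*p + t*q) ≤ (1-t) * f p + t * f q)
    (F6 : ∀ p q t : ℝ, 0 < p → 0 < q → 0 ≤ t → t ≤ 1 →
      (1-t) * ((1/p) * f p) + t * ((1/q) * f q) ≤ (1/((1-t)*p + t*q)) * f ((1-t)*p + t*q))
    {a : ℝ} (ha : 0 < a) :
    DifferentiableAt ℝ f a ∧ a⁻¹ * f a ≤ deriv f a ∧ deriv f a ≤ 0 := by
  have hconv : ConvexOn ℝ (Set.Ioi 0) f := by
    refine ⟨convex_Ioi 0, ?_⟩
    intro p hp q hq α β hα hβ hαβ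
    have h := F5 p q β (mem_Ioi.1 hp) (mem_Ioi.1 hq) hβ (by linarith)
    have hα1 : 1 - β = α := by linarith
    rw [hα1] at h
    simpa [smul_eq_mul] using h
  have hgconv : ConvexOn ℝ (Set.Ioi 0) (fun s => -((1/s) * f s)) := by
    refine ⟨convex_Ioi 0, ?_⟩
    intro p hp q hq α β hα hβ hαβ
    have h := F6 p q β (mem_Ioi.1 hp) (mem_Ioi.1 hq) hβ (by linarith)
    have hα1 : 1 - β = α := by linarith
    rw [hα1] at h
    simp only [smul_eq_mul]
    linarith
  set S : ℝ → ℝ := fun q => (f q - f a)/(q - a) with hSdef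
  have chord_lb : ∀ q : ℝ, a < q → (1/a) * f a ≤ S q := by
    intro q haq
    have hq : 0 < q := lt_trans ha haq
    have h4 := F4 a q ha haq.le
    show (1/a) * f a ≤ (f q - f a)/(q - a)
    rw [le_div_iff₀ (by linarith : (0:ℝ) < q - a)]
    have h5 : q * ((1/a) * f a) ≤ q * ((1/q) * f q) := mul_le_mul_of_nonneg_left h4 hq.le
    have h6 : q * ((1/q) * f q) = f q := by field_simp
    have h7 : (1/a) * f a * a = f a := by field_simp
    linarith
  have chord_ub : ∀ q : ℝ, a < q → S q ≤ 0 := by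
    intro q haq
    have h3 := F3 a q ha haq.le
    show (f q - f a)/(q - a) ≤ 0
    apply div_nonpos_of_nonpos_of_nonneg <;> linarith
  have chord_left_ub : ∀ p : ℝ, 0 < p → p < a → S p ≤ 0 := by
    intro p hp hpa
    have h3 := F3 p a hp hpa.le
    show (f p - f a)/(p - a) ≤ 0
    apply div_nonpos_of_nonneg_of_nonpos <;> linarith
  have hmemIoi : ∀ {p : ℝ}, 0 < p → p ∈ Set.Ioi (0:ℝ) := fun hp => mem_Ioi.2 hp
  have SR_mono : MonotoneOn S (Set.Ioo a (a+1)) := by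
    intro p hp q hq hpq
    exact hconv.secant_mono (hmemIoi ha) (hmemIoi (lt_trans ha hp.1))
      (hmemIoi (lt_trans ha hq.1)) hp.1.ne' hq.1.ne' hpq
  have SL_mono : MonotoneOn S (Set.Ioo (a/2) a) := by
    intro p hp q hq hpq
    exact hconv.secant_mono (hmemIoi ha) (hmemIoi (by linarith [hp.1]))
      (hmemIoi (by linarith [hq.1])) hp.2.ne hq.2.ne hpq
  have hRne : (S '' Set.Ioo a (a+1)).Nonempty :=
    ⟨S (a + 1/2), Set.mem_image_of_mem _ ⟨by linarith, by linarith⟩⟩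
  have hLne : (S '' Set.Ioo (a/2) a).Nonempty :=
    ⟨S (3*a/4), Set.mem_image_of_mem _ ⟨by linarith, by linarith⟩⟩
  have hRbdd : BddBelow (S '' Set.Ioo a (a+1)) := by
    refine ⟨(1/a) * f a, ?_⟩
    rintro s ⟨q, hq, rfl⟩
    exact chord_lb q hq.1
  have hLbdd : BddAbove (S '' Set.Ioo (a/2) a) := by
    refine ⟨0, ?_⟩
    rintro s ⟨p, hp, rfl⟩
    exact chord_left_ub p (by linarith [hp.1]) hp.2
  set sR := sInf (S '' Set.Ioo a (a+1)) with hsR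
  set sL := sSup (S '' Set.Ioo (a/2) a) with hsL
  have TR : Tendsto S (𝓝[>] a) (𝓝 sR) :=
    MonotoneOn.tendsto_nhdsWithin_Ioo_right ⟨a + 1/2, by constructor <;> linarith⟩ SR_mono hRbdd
  have TL : Tendsto S (𝓝[<] a) (𝓝 sL) :=
    MonotoneOn.tendsto_nhdsWithin_Ioo_left ⟨3*a/4, by constructor <;> linarith⟩ SL_mono hLbdd
  have hfleft : Tendsto f (𝓝[<] a) (𝓝 (f a)) := by
    have hmem : Set.Ioo (a/2) a ∈ 𝓝[<] a := Ioo_mem_nhdsLT (by linarith)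
    have hub : ∀ᶠ p in 𝓝[<] a, f p ≤ p * ((1/a) * f a) := by
      filter_upwards [hmem] with p hp
      have hp0 : 0 < p := by linarith [hp.1]
      have h4 := F4 p a hp0 hp.2.le
      have h5 : p * ((1/p) * f p) ≤ p * ((1/a) * f a) := mul_le_mul_of_nonneg_left h4 hp0.le
      have h6 : p * ((1/p) * f p) = f p := by field_simp
      linarith
    have hlb : ∀ᶠ p in 𝓝[<] a, f a ≤ f p := by
      filter_upwards [hmem] with p hp
      exact F3 p a (by linarith [hp.1]) hp.2.le
    have htop : Tendsto (fun p : ℝ => p * ((1/a) * f a)) (𝓝[<] a) (𝓝 (a * ((1/a) * f a))) :=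
      (continuous_id.mul continuous_const).continuousAt.tendsto.mono_left nhdsWithin_le_nhds
    have haa : a * ((1/a) * f a) = f a := by field_simp
    rw [haa] at htop
    exact tendsto_of_tendsto_of_tendsto_of_le_of_le' tendsto_const_nhds htop hlb hub
  have hLR : sL ≤ sR := by
    apply le_csInf hRne
    rintro s ⟨q, hq, rfl⟩
    apply csSup_le hLne
    rintro s' ⟨p, hp, rfl⟩
    exact hconv.secant_mono (hmemIoi ha) (hmemIoi (by linarith [hp.1]))
      (hmemIoi (lt_trans ha hq.1)) hp.2.ne hq.1.ne' (by linarith [hp.2, hq.1])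
  have key : ∀ q : ℝ, a < q → ∀ p : ℝ, 0 < p → p < a →
      (a/q) * S q - (1/q) * f a + (1/p) * f p ≤ S p := by
    intro q haq p hp0 hpa
    have hq0 : 0 < q := lt_trans ha haq
    have ha' : a ≠ 0 := ha.ne'
    have hp' : p ≠ 0 := hp0.ne'
    have hq' : q ≠ 0 := hq0.ne'
    have hpa' : p - a ≠ 0 := sub_ne_zero.2 hpa.ne
    have haq' : q - a ≠ 0 := sub_ne_zero.2 haq.ne'
    have hsec := hgconv.secant_mono (hmemIoi ha) (hmemIoi hp0) (hmemIoi hq0)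
      hpa.ne haq.ne' (by linarith)
    have e1 : (-((1/p) * f p) - -((1/a) * f a))/(p - a)
        = -((1/a) * ((f p - f a)/(p - a))) + (1/(a*p)) * f p := by
      field_simp
      ring
    have e2 : (-((1/q) * f q) - -((1/a) * f a))/(q - a)
        = -((1/q) * ((f q - f a)/(q - a))) + (1/(a*q)) * f a := by
      field_simp
      ring
    rw [e1, e2] at hsec
    have hmul := mul_le_mul_of_nonneg_left hsec ha.le
    have e3 : a * (-((1/a) * ((f p - f a)/(p - a))) + (1/(a*p)) * f p)
        = -((f p - f a)/(p - a)) + (1/p) * f p := by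
      field_simp
    have e4 : a * (-((1/q) * ((f q - f a)/(q - a))) + (1/(a*q)) * f a)
        = -((a/q) * ((f q - f a)/(q - a))) + (1/q) * f a := by
      field_simp
    rw [e3, e4] at hmul
    show (a/q) * ((f q - f a)/(q - a)) - (1/q) * f a + (1/p) * f p ≤ (f p - f a)/(p - a)
    linarith
  have hq_bound : ∀ q : ℝ, a < q →
      (a/q) * S q - (1/q) * f a + (1/a) * f a ≤ sL := by
    intro q haq
    have hinv : Tendsto (fun p : ℝ => 1/p) (𝓝[<] a) (𝓝 (1/a)) :=
      ((continuousAt_const.div continuousAt_id ha.ne').tendsto).mono_left nhdsWithin_le_nhds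
    have hte : Tendsto (fun p => (a/q) * S q - (1/q) * f a + (1/p) * f p) (𝓝[<] a)
        (𝓝 ((a/q) * S q - (1/q) * f a + (1/a) * f a)) :=
      tendsto_const_nhds.add (hinv.mul hfleft)
    apply le_of_tendsto hte
    filter_upwards [Ioo_mem_nhdsLT (show a/2 < a by linarith)] with p hp
    calc (a/q) * S q - (1/q) * f a + (1/p) * f p
        ≤ S p := key q haq p (by linarith [hp.1]) hp.2
      _ ≤ sL := le_csSup hLbdd (Set.mem_image_of_mem _ hp)
  have hRL : sR ≤ sL := by
    have hdivq : Tendsto (fun q : ℝ => a/q) (𝓝[>] a) (𝓝 (a/a)) :=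
      ((continuousAt_const.div continuousAt_id ha.ne').tendsto).mono_left nhdsWithin_le_nhds
    have hinvq : Tendsto (fun q : ℝ => (1/q) * f a) (𝓝[>] a) (𝓝 ((1/a) * f a)) :=
      (((continuousAt_const.div continuousAt_id ha.ne').tendsto).mono_left
        nhdsWithin_le_nhds).mul_const _
    have hQt : Tendsto (fun q => (a/q) * S q - (1/q) * f a + (1/a) * f a) (𝓝[>] a)
        (𝓝 ((a/a) * sR - (1/a) * f a + (1/a) * f a)) :=
      ((hdivq.mul TR).sub hinvq).add tendsto_const_nhds
    have e5 : (a/a) * sR - (1/a) * f a + (1/a) * f a = sR := by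
      field_simp
      ring
    rw [e5] at hQt
    apply le_of_tendsto hQt
    filter_upwards [Ioo_mem_nhdsGT (show a < a + 1 by linarith)] with q hq
    exact hq_bound q hq.1
  have hEq : sL = sR := le_antisymm hLR hRL
  have hslope : slope f a = S := by
    funext q
    rw [slope_def_field]
  have hder : HasDerivAt f sR a := by
    rw [hasDerivAt_iff_tendsto_slope, hslope, ← nhdsLT_sup_nhdsGT a, tendsto_sup]
    rw [hEq] at TL
    exact ⟨TL, TR⟩
  have hlb : (1/a) * f a ≤ sR := le_csInf hRne (by rintro s ⟨q, hq, rfl⟩; exact chord_lb q hq.1)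
  have hub : sR ≤ 0 := by
    have h1 : sR ≤ S (a + 1/2) :=
      csInf_le hRbdd (Set.mem_image_of_mem _ ⟨by linarith, by linarith⟩)
    have h2 : S (a + 1/2) ≤ 0 := chord_ub _ (by linarith)
    linarith
  refine ⟨hder.differentiableAt, ?_, ?_⟩
  · rw [hder.deriv, inv_eq_one_div]
    exact hlb
  · rw [hder.deriv]
    exact hub

end OneD
theorem stmt9 (d : ℕ) (hd : 3 ≤ d) (V : EuclideanSpace ℝ (Fin d) → ℝ)
    (hV0 : ∀ x, 0 ≤ V x) (hVhold : ∃ (C r : NNReal), 0 < r ∧ HolderWith C r V)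
    (hVsupp : HasCompactSupport V) (hVint : ∫ x, V x = 1)
    (w : ℝ → EuclideanSpace ℝ (Fin d) → ℝ)
    (hw : ∀ a : ℝ, 0 < a → ContDiff ℝ 2 (w a) ∧
      (∀ x, lap (w a) x = a * V x * (1 + w a x)) ∧
      Tendsto (w a) (cocompact (EuclideanSpace ℝ (Fin d))) (nhds 0)) :
    ∀ x : EuclideanSpace ℝ (Fin d), ∀ a : ℝ, 0 < a →
      DifferentiableAt ℝ (fun b => w b x) a ∧
      a⁻¹ * w a x ≤ deriv (fun b => w b x) a ∧
      deriv (fun b => w b x) a ≤ 0 := by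
  intro x a ha
  have hw' : HW V w := hw
  exact oneD (f := fun b => w b x)
    (fun p q hp hpq => step3 hd hV0 hw' hp hpq x)
    (fun p q hp hpq => step4 hd hV0 hw' hp hpq x)
    (fun p q t hp hq ht0 ht1 => step5 hd hV0 hw' hp hq ht0 ht1 x)
    (fun p q t hp hq ht0 ht1 => step6 hd hV0 hw' hp hq ht0 ht1 x)
    ha
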